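/- Boundary behaviour of the auxiliary function θ (Lemma 5.6): Let α ∈ G ∪ N, let u be the corresponding solution, and define θ(τ) = −sinh(τ)·u'(τ)/u(τ) for τ ∈ (0, b(α)). Then lim_{τ→0+} θ(τ) = 0 and lim_{τ→b(α)} θ(τ) = +∞ (for α ∈ G this means lim_{τ→∞} θ(τ) = +∞; in particular, for α ∈ G one eventually has −u'(τ)/u(τ) > √(b̃/2)). -/

import Mathlib

open Set Filter

private lemma theta_cross_up {w : ℝ → ℝ} {d s τ₁ : ℝ} (hs : s < τ₁) (hd : HasDerivAt w d s)
    (hdpos : 0 < d) (hws : 0 ≤ w s) (hneg : ∀ τ ∈ Set.Ioc s τ₁, w τ < 0) : False := by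
  have h1 := hasDerivAt_iff_tendsto_slope.mp hd
  have h2 : ∀ᶠ τ in nhdsWithin s (Set.Ioi s), 0 < slope w s τ :=
    (h1.eventually (eventually_gt_nhds hdpos)).filter_mono
      (nhdsWithin_mono s (fun x hx => ne_of_gt hx))
  have h3 : Set.Ioc s τ₁ ∈ nhdsWithin s (Set.Ioi s) :=
    Ioc_mem_nhdsGT_of_mem ⟨le_refl s, hs⟩
  obtain ⟨τ, hτ1, hτ2⟩ := (h2.and (eventually_of_mem h3 (fun x hx => hx))).exists
  have hts : 0 < τ - s := sub_pos.2 hτ2.1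
  have : 0 < w τ - w s := by
    have := mul_pos hτ1 hts
    rwa [slope_def_field, div_mul_cancel₀] at this
    exact ne_of_gt hts
  have := hneg τ hτ2
  linarith

private lemma theta_aux_zero {α : ℝ} (hα : 0 < α) {u : ℝ → ℝ}
    (huc : ContinuousOn u (Set.Ici 0)) (hu0 : u 0 = α)
    (hu'0 : Tendsto (deriv u) (nhdsWithin 0 (Set.Ioi 0)) (nhds 0)) :
    Tendsto (fun τ => -(Real.sinh τ * deriv u τ) / u τ)
      (nhdsWithin 0 (Set.Ioi 0)) (nhds 0) := by
  have hnum : Tendsto (fun τ => -(Real.sinh τ * deriv u τ)) (nhdsWithin 0 (Ioi 0)) (nhds 0) := by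
    have hs : Tendsto Real.sinh (nhdsWithin 0 (Ioi 0)) (nhds 0) := by
      simpa using (Real.continuous_sinh.tendsto 0).mono_left nhdsWithin_le_nhds
    simpa using (hs.mul hu'0).neg
  have hden : Tendsto u (nhdsWithin 0 (Ioi 0)) (nhds α) := by
    have h1 : ContinuousWithinAt u (Ici 0) 0 := huc 0 self_mem_Ici
    have := h1.tendsto
    rw [hu0] at this
    exact this.mono_left (nhdsWithin_mono 0 Ioi_subset_Ici_self)
  have := hnum.div hden (ne_of_gt hα)
  simpa [Pi.div_def] using this

set_option maxHeartbeats 1600000 in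
private lemma theta_aux_gronwall {m a b : ℝ} (hm : 2 < m) (ha : 0 < a) (hb : 0 < b)
    {F : ℝ → ℝ} (hF : ∀ s, F s = a * s ^ (1 + 2 / m) - b * s) {u : ℝ → ℝ}
    (hud : ∀ τ ∈ Set.Ioi (0 : ℝ), DifferentiableAt ℝ u τ)
    (hud' : ∀ τ ∈ Set.Ioi (0 : ℝ), DifferentiableAt ℝ (deriv u) τ)
    (hode : ∀ τ ∈ Set.Ioi (0 : ℝ),
      deriv (deriv u) τ + (Real.cosh τ / Real.sinh τ) * deriv u τ + F (u τ) = 0)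
    {bα : ℝ} (hbα : 0 < bα) (hubα : u bα = 0) (hpos : ∀ τ ∈ Set.Ico 0 bα, 0 < u τ)
    (hzero : deriv u bα = 0) : False := by
  have hm0 : (0:ℝ) < m := by linarith
  have hexp : (0:ℝ) < 2 / m := by positivity
  -- bound on u on Icc (bα/2) bα
  have hIcc : Icc (bα/2) bα ⊆ Ioi (0:ℝ) := fun x hx => by
    simp only [mem_Ioi]; have := hx.1; linarith
  have hucIcc : ContinuousOn u (Icc (bα/2) bα) :=
    fun x hx => ((hud x (hIcc hx)).continuousAt).continuousWithinAt
  obtain ⟨M, hM⟩ := (isCompact_Icc (a := bα/2) (b := bα)).exists_bound_of_continuousOn hucIcc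
  have hM1 : (1:ℝ) ≤ max M 1 := le_max_right _ _
  set M' := max M 1 with hM'
  have hM0 : (0:ℝ) < M' := lt_of_lt_of_le one_pos hM1
  have huM : ∀ τ ∈ Icc (bα/2) bα, |u τ| ≤ M' := fun τ hτ => (hM τ hτ).trans (le_max_left _ _)
  -- Lipschitz-type bound for F : |F s| ≤ L * |s| for s in [0, M']
  set L := a * M' ^ (2/m) + b with hL
  have hL0 : 0 < L := by positivity
  have hFlip : ∀ s : ℝ, 0 ≤ s → s ≤ M' → |F s| ≤ L * s := by
    intro s hs0 hsM
    rw [hF]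
    have h1 : s ^ (1 + 2/m) = s * s ^ (2/m) := by
      rw [Real.rpow_add' hs0 (by positivity), Real.rpow_one]
    have h2 : s ^ (2/m) ≤ M' ^ (2/m) := Real.rpow_le_rpow hs0 hsM (le_of_lt hexp)
    have h3 : 0 ≤ s ^ (2/m) := Real.rpow_nonneg hs0 _
    rw [h1]
    have key : a * (s * s ^ (2/m)) ≤ a * M' ^ (2/m) * s := by
      have := mul_le_mul_of_nonneg_left h2 (mul_nonneg (le_of_lt ha) hs0)
      nlinarith
    have nn : 0 ≤ a * (s * s ^ (2/m)) := by positivity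
    have nn2 : 0 ≤ a * M' ^ (2/m) * s := by positivity
    rw [abs_le]
    constructor <;> [nlinarith; nlinarith]
  -- coth bound on the interval
  set C := Real.cosh bα / Real.sinh (bα/2) with hC
  have hsinh2 : 0 < Real.sinh (bα/2) := Real.sinh_pos_iff.2 (by linarith)
  have hC0 : 0 < C := div_pos (Real.cosh_pos _) hsinh2
  have hcoth : ∀ τ ∈ Icc (bα/2) bα, Real.cosh τ / Real.sinh τ ≤ C := by
    intro τ hτ
    have h1 : 0 < Real.sinh τ := Real.sinh_pos_iff.2 (by have := hτ.1; linarith)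
    have h2 : Real.sinh (bα/2) ≤ Real.sinh τ := Real.sinh_le_sinh.2 hτ.1
    have h3 : Real.cosh τ ≤ Real.cosh bα := by
      rw [Real.cosh_le_cosh]
      rw [abs_of_nonneg (by linarith [hτ.1] : (0:ℝ) ≤ τ), abs_of_nonneg (le_of_lt hbα)]
      exact hτ.2
    exact div_le_div₀ (le_of_lt (Real.cosh_pos _)) h3 hsinh2 h2
  set K := 1 + 2*C + 2*L with hK
  -- the energy function
  set E : ℝ → ℝ := fun τ => (u τ)^2 + (deriv u τ)^2 with hE
  set E' : ℝ → ℝ := fun τ => 2 * u τ * deriv u τ + 2 * deriv u τ * deriv (deriv u) τ with hE'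
  have hEd : ∀ τ ∈ Ioi (0:ℝ), HasDerivAt E (E' τ) τ := by
    intro τ hτ
    have h1 := ((hud τ hτ).hasDerivAt.pow 2)
    have h2 := ((hud' τ hτ).hasDerivAt.pow 2)
    have := h1.add h2
    exact this.congr_deriv (by simp only [hE']; ring)
  -- the reversed function
  set g : ℝ → ℝ := fun t => E (bα - t) with hg
  have hgd : ∀ t ∈ Icc (0:ℝ) (bα/2), HasDerivAt g (-(E' (bα - t))) t := by
    intro t ht
    have hmem : bα - t ∈ Ioi (0:ℝ) := by
      simp only [mem_Ioi]; have := ht.2; linarith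
    have h1 : HasDerivAt (fun t : ℝ => bα - t) (-1) t := by
      simpa using (hasDerivAt_id t).const_sub bα
    have := (hEd _ hmem).comp t h1
    exact this.congr_deriv (by ring)
  -- Gronwall bound
  have hbound : ∀ t ∈ Ico (0:ℝ) (bα/2), ‖-(E' (bα - t))‖ ≤ K * ‖g t‖ + 0 := by
    intro t ht
    set τ := bα - t with hτdef
    have hτIcc : τ ∈ Icc (bα/2) bα := by
      constructor <;> [skip; skip] <;> simp only [hτdef] <;>
        [linarith [ht.2]; linarith [ht.1]]
    have hτpos : τ ∈ Ioi (0:ℝ) := hIcc hτIcc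
    have hode' := hode τ hτpos
    have hu2 : deriv (deriv u) τ = -((Real.cosh τ / Real.sinh τ) * deriv u τ) - F (u τ) := by
      linarith
    have hu0' : 0 ≤ u τ := by
      rcases eq_or_lt_of_le hτIcc.2 with h | h
      · rw [h, hubα]
      · exact le_of_lt (hpos τ ⟨by have := hτIcc.1; linarith, h⟩)
    have hFb : |F (u τ)| ≤ L * u τ := hFlip (u τ) hu0' (by simpa [abs_of_nonneg hu0'] using huM τ hτIcc)
    have hcothb := hcoth τ hτIcc
    have hcoth0 : 0 ≤ Real.cosh τ / Real.sinh τ :=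
      le_of_lt (div_pos (Real.cosh_pos _) (Real.sinh_pos_iff.2 hτpos))
    have hgt : g t = E τ := rfl
    have hEnn : 0 ≤ E τ := add_nonneg (sq_nonneg _) (sq_nonneg _)
    rw [hgt, norm_neg, Real.norm_eq_abs, Real.norm_eq_abs, abs_of_nonneg hEnn, add_zero]
    set x := u τ with hx
    set y := deriv u τ with hy
    set z := deriv (deriv u) τ with hz0
    set c := Real.cosh τ / Real.sinh τ with hc
    set f := F (u τ) with hf
    have h1 : |2 * x * y| ≤ x^2 + y^2 := by
      rw [abs_le]; constructor <;> nlinarith [sq_nonneg (x+y), sq_nonneg (x-y)]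
    have h1l := (abs_le.mp h1).1
    have h1r := (abs_le.mp h1).2
    have h2 : |2 * y * f| ≤ L * (x^2 + y^2) := by
      have e1 : |2 * y * f| = 2 * (|y| * |f|) := by
        rw [abs_mul, abs_mul]; simp [mul_assoc]
      rw [e1]
      have e2 : |y| * |f| ≤ |y| * (L * x) :=
        mul_le_mul_of_nonneg_left hFb (abs_nonneg _)
      have e3 : 2 * (|y| * (L * x)) ≤ L * (x^2 + y^2) := by
        nlinarith [sq_nonneg (|y| - x), sq_abs y, abs_nonneg y, hL0]
      linarith
    have h2l := (abs_le.mp h2).1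
    have h2r := (abs_le.mp h2).2
    have h3 : c * y^2 ≤ C * y^2 := mul_le_mul_of_nonneg_right hcothb (sq_nonneg _)
    have h30 : 0 ≤ c * y^2 := mul_nonneg hcoth0 (sq_nonneg _)
    have h4 : 0 ≤ C * x^2 := mul_nonneg (le_of_lt hC0) (sq_nonneg _)
    have h5 : 0 ≤ L * (x^2 + y^2) :=
      mul_nonneg (le_of_lt hL0) (add_nonneg (sq_nonneg _) (sq_nonneg _))
    have h6 : 0 ≤ C * y^2 := mul_nonneg (le_of_lt hC0) (sq_nonneg _)
    have hKE : K * ((u τ)^2 + (deriv u τ)^2) = (x^2+y^2) + 2*(C*x^2) + 2*(C*y^2) + 2*(L*(x^2+y^2)) := by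
      rw [hK]; ring
    have hE'eq : E' τ = 2*x*y - 2*(c*y^2) - 2*y*f := by
      simp only [hE']
      rw [← hx, ← hy, ← hz0, hu2]; ring
    show |E' τ| ≤ K * ((u τ)^2 + (deriv u τ)^2)
    rw [hE'eq, hKE, abs_le]
    constructor <;> linarith
  -- now apply Gronwall
  have hgc : ContinuousOn g (Icc (0:ℝ) (bα/2)) :=
    fun t ht => ((hgd t ht).continuousAt).continuousWithinAt
  have hg0 : ‖g 0‖ ≤ 0 := by
    simp only [hg, hE, sub_zero, hubα, hzero]
    norm_num
  have := norm_le_gronwallBound_of_norm_deriv_right_le hgc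
    (fun t ht => (hgd t (Ico_subset_Icc_self ht)).hasDerivWithinAt) hg0 hbound
  have hfin := this (bα/2) ⟨by linarith, le_refl _⟩
  rw [gronwallBound_ε0] at hfin
  simp only [mul_zero, zero_mul] at hfin
  have hgval : g (bα/2) = (u (bα/2))^2 + (deriv u (bα/2))^2 := by
    simp only [hg, hE]; norm_num [show bα - bα/2 = bα/2 by ring]
  have hupos : 0 < u (bα/2) := hpos (bα/2) ⟨by linarith, by linarith⟩
  rw [Real.norm_eq_abs] at hfin
  have : (u (bα/2))^2 ≤ 0 := by
    have h7 : 0 ≤ g (bα/2) := by rw [hgval]; positivity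
    rw [abs_of_nonneg h7, hgval] at hfin
    nlinarith [sq_nonneg (deriv u (bα/2))]
  nlinarith

private lemma theta_aux_part1 {u : ℝ → ℝ}
    (hud : ∀ τ ∈ Set.Ioi (0 : ℝ), DifferentiableAt ℝ u τ)
    (hud' : ∀ τ ∈ Set.Ioi (0 : ℝ), DifferentiableAt ℝ (deriv u) τ)
    {bα : ℝ} (hbα : 0 < bα) (hubα : u bα = 0) (hpos : ∀ τ ∈ Set.Ico 0 bα, 0 < u τ)
    (hne : deriv u bα ≠ 0) :
    Tendsto (fun τ => -(Real.sinh τ * deriv u τ) / u τ) (nhdsWithin bα (Set.Iio bα)) atTop := by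
  -- deriv u bα ≤ 0
  have hIoo : ∀ᶠ τ in nhdsWithin bα (Iio bα), τ ∈ Ioo 0 bα :=
    eventually_of_mem (Ioo_mem_nhdsLT_of_mem ⟨hbα, le_refl _⟩) (fun x hx => hx)
  have hle : deriv u bα ≤ 0 := by
    have hslope : Tendsto (slope u bα) (nhdsWithin bα (Iio bα)) (nhds (deriv u bα)) :=
      (hasDerivAt_iff_tendsto_slope.mp (hud bα (mem_Ioi.2 hbα)).hasDerivAt).mono_left
        (nhdsWithin_mono bα (fun x hx => ne_of_lt hx))
    refine le_of_tendsto hslope ?_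
    filter_upwards [hIoo] with τ hτ
    rw [slope_def_field, hubα]
    have h1 : 0 < u τ := hpos τ ⟨le_of_lt hτ.1, hτ.2⟩
    have h2 : τ - bα < 0 := by linarith [hτ.2]
    exact le_of_lt (div_neg_of_pos_of_neg (by linarith) (by linarith))
  have hlt : deriv u bα < 0 := lt_of_le_of_ne hle hne
  -- numerator tends to positive constant
  have hc : 0 < -(Real.sinh bα * deriv u bα) :=
    by nlinarith [Real.sinh_pos_iff.2 hbα]
  have hnum : Tendsto (fun τ => -(Real.sinh τ * deriv u τ)) (nhdsWithin bα (Iio bα))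
      (nhds (-(Real.sinh bα * deriv u bα))) := by
    exact ((Real.continuous_sinh.continuousAt.mul
      (hud' bα (mem_Ioi.2 hbα)).continuousAt).neg.tendsto).mono_left nhdsWithin_le_nhds
  -- denominator tends to 0 within Ioi 0
  have hden : Tendsto u (nhdsWithin bα (Iio bα)) (nhdsWithin 0 (Ioi 0)) := by
    rw [tendsto_nhdsWithin_iff]
    constructor
    · have := (hud bα (mem_Ioi.2 hbα)).continuousAt.tendsto
      rw [hubα] at this
      exact this.mono_left nhdsWithin_le_nhds
    · filter_upwards [hIoo] with τ hτ
      exact hpos τ ⟨le_of_lt hτ.1, hτ.2⟩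
  have hinv : Tendsto (fun τ => (u τ)⁻¹) (nhdsWithin bα (Iio bα)) atTop :=
    tendsto_inv_nhdsGT_zero.comp hden
  have := Tendsto.pos_mul_atTop hc hnum hinv
  refine this.congr (fun τ => ?_)
  rw [div_eq_mul_inv]

private lemma theta_aux_small {m a b : ℝ} (hm : 2 < m) (ha : 0 < a) (hb : 0 < b) {u : ℝ → ℝ}
    (hupos : ∀ τ ∈ Set.Ioi (0 : ℝ), 0 < u τ) (hulim : Tendsto u atTop (nhds 0)) :
    ∃ T₀ : ℝ, 1 ≤ T₀ ∧ ∀ τ ≥ T₀, a * (u τ) ^ (2/m) ≤ b/4 := by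
  have hm0 : (0:ℝ) < m := by linarith
  have hexp : (0:ℝ) < 2 / m := by positivity
  set s₀ : ℝ := (b / (4*a)) ^ (m/2) with hs₀
  have hs₀pos : 0 < s₀ := Real.rpow_pos_of_pos (by positivity) _
  have hsmall : ∀ᶠ τ in atTop, u τ < s₀ := by
    have := hulim (Iio_mem_nhds hs₀pos)
    filter_upwards [this] with τ hτ using hτ
  obtain ⟨T₁, hT₁⟩ := eventually_atTop.mp hsmall
  refine ⟨max T₁ 1, le_max_right _ _, fun τ hτ => ?_⟩
  have hτ1 : (1:ℝ) ≤ τ := le_trans (le_max_right _ _) hτ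
  have hτ0 : τ ∈ Set.Ioi (0:ℝ) := by simp only [Set.mem_Ioi]; linarith
  have h1 : u τ < s₀ := hT₁ τ (le_trans (le_max_left _ _) hτ)
  have h2 : (u τ) ^ (2/m) ≤ s₀ ^ (2/m) :=
    Real.rpow_le_rpow (le_of_lt (hupos τ hτ0)) (le_of_lt h1) (le_of_lt hexp)
  have h3 : s₀ ^ (2/m) = b / (4*a) := by
    rw [hs₀, ← Real.rpow_mul (by positivity : (0:ℝ) ≤ b/(4*a))]
    rw [show m/2 * (2/m) = 1 by field_simp, Real.rpow_one]
  calc a * (u τ) ^ (2/m) ≤ a * (b/(4*a)) := by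
        rw [← h3]; exact mul_le_mul_of_nonneg_left h2 (le_of_lt ha)
    _ = b/4 := by field_simp

set_option maxHeartbeats 1600000 in
private lemma theta_aux_stepA {m a b : ℝ} (hm : 2 < m) (ha : 0 < a) (hb : 0 < b)
    {F : ℝ → ℝ} (hF : ∀ s, F s = a * s ^ (1 + 2 / m) - b * s) {u : ℝ → ℝ}
    (hud : ∀ τ ∈ Set.Ioi (0 : ℝ), DifferentiableAt ℝ u τ)
    (hud' : ∀ τ ∈ Set.Ioi (0 : ℝ), DifferentiableAt ℝ (deriv u) τ)
    (hode : ∀ τ ∈ Set.Ioi (0 : ℝ),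
      deriv (deriv u) τ + (Real.cosh τ / Real.sinh τ) * deriv u τ + F (u τ) = 0)
    (hupos : ∀ τ ∈ Set.Ioi (0 : ℝ), 0 < u τ) (hulim : Tendsto u atTop (nhds 0))
    {T₀ : ℝ} (hT₀1 : 1 ≤ T₀)
    (hsm : ∀ τ ≥ T₀, a * (u τ) ^ (2/m) ≤ b/4) :
    ∀ τ ≥ T₀, deriv u τ < 0 := by
  have hm0 : (0:ℝ) < m := by linarith
  have hexp : (0:ℝ) < 2 / m := by positivity
  have hsplit : ∀ s : ℝ, 0 ≤ s → s ^ (1+2/m) = s * s ^ (2/m) := fun s hs => by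
    rw [Real.rpow_add' hs (by positivity), Real.rpow_one]
  have hv' : ∀ τ ∈ Ioi (0:ℝ), HasDerivAt (fun σ => Real.sinh σ * deriv u σ)
      (Real.sinh τ * (b * u τ - a * u τ ^ (1 + 2/m))) τ := by
    intro τ hτ
    have h1 := (Real.hasDerivAt_sinh τ).mul (hud' τ hτ).hasDerivAt
    have hs : (0:ℝ) < Real.sinh τ := Real.sinh_pos_iff.2 hτ
    have h2 := hode τ hτ
    rw [hF] at h2
    have heq : Real.cosh τ * deriv u τ + Real.sinh τ * deriv (deriv u) τ
        = Real.sinh τ * (b * u τ - a * u τ ^ (1 + 2/m)) := by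
      have e : Real.cosh τ / Real.sinh τ * Real.sinh τ = Real.cosh τ :=
        div_mul_cancel₀ _ (ne_of_gt hs)
      linear_combination Real.sinh τ * h2 - deriv u τ * e
    rwa [heq] at h1
  have hdpos : ∀ x ≥ T₀, 0 < Real.sinh x * (b * u x - a * u x ^ (1 + 2/m)) := by
    intro x hx
    have hx0 : x ∈ Ioi (0:ℝ) := by simp only [mem_Ioi]; linarith
    have h1 : 0 < u x := hupos x hx0
    have h2 := hsm x hx
    have h3 : u x ^ (1+2/m) = u x * u x ^ (2/m) := hsplit _ (le_of_lt h1)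
    have h4 : 0 < Real.sinh x := Real.sinh_pos_iff.2 hx0
    have h5 : b * u x - a * u x ^ (1+2/m) = u x * (b - a * u x ^ (2/m)) := by
      rw [h3]; ring
    rw [h5]
    apply mul_pos h4 (mul_pos h1 (by nlinarith))
  intro τ₀ hτ₀
  by_contra hcon
  push_neg at hcon
  have hτ₀0 : (0:ℝ) < τ₀ := lt_of_lt_of_le one_pos (le_trans hT₀1 hτ₀)
  have hIci : ∀ x ∈ Ici τ₀, x ∈ Ioi (0:ℝ) := fun x hx => by
    simp only [mem_Ioi]; have : τ₀ ≤ x := hx; linarith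
  have hmono : StrictMonoOn (fun σ => Real.sinh σ * deriv u σ) (Ici τ₀) := by
    apply strictMonoOn_of_deriv_pos (convex_Ici τ₀)
    · exact fun x hx => ((hv' x (hIci x hx)).continuousAt).continuousWithinAt
    · intro x hx
      rw [interior_Ici] at hx
      have hx' : x ∈ Ioi (0:ℝ) := by simp only [mem_Ioi]; have : τ₀ < x := hx; linarith
      rw [(hv' x hx').deriv]
      exact hdpos x (by have : τ₀ < x := hx; linarith)
  have hv0 : 0 ≤ Real.sinh τ₀ * deriv u τ₀ :=
    mul_nonneg (le_of_lt (Real.sinh_pos_iff.2 hτ₀0)) hcon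
  have hv1 : 0 < Real.sinh (τ₀+1) * deriv u (τ₀+1) :=
    lt_of_le_of_lt hv0 (hmono (self_mem_Ici) (by simp only [mem_Ici]; linarith) (by linarith))
  have hu'pos : ∀ x ≥ τ₀+1, 0 < deriv u x := by
    intro x hx
    have hvx : 0 < Real.sinh x * deriv u x :=
      lt_of_lt_of_le hv1 ((hmono.monotoneOn) (by simp only [mem_Ici]; linarith)
        (by simp only [mem_Ici]; linarith) hx)
    have hsx : 0 < Real.sinh x := Real.sinh_pos_iff.2 (by linarith : (0:ℝ) < x)
    nlinarith
  have humono : StrictMonoOn u (Ici (τ₀+1)) := by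
    apply strictMonoOn_of_deriv_pos (convex_Ici _)
    · exact fun x hx => ((hud x (by simp only [mem_Ioi]; have : τ₀+1 ≤ x := hx; linarith)).continuousAt).continuousWithinAt
    · intro x hx
      rw [interior_Ici] at hx
      exact hu'pos x (le_of_lt hx)
  have h2pos : 0 < u (τ₀+2) := hupos _ (by simp only [mem_Ioi]; linarith)
  obtain ⟨σ, hσ1, hσ2⟩ := (((eventually_atTop.mp (hulim (Iio_mem_nhds h2pos))).choose_spec) |> fun h => 
    (⟨max (eventually_atTop.mp (hulim (Iio_mem_nhds h2pos))).choose (τ₀+2), le_max_right _ _,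
      h _ (le_max_left _ _)⟩ : ∃ σ, σ ≥ τ₀+2 ∧ u σ < u (τ₀+2)))
  have := humono.monotoneOn (by simp only [mem_Ici]; linarith : (τ₀+2) ∈ Ici (τ₀+1))
    (by simp only [mem_Ici]; linarith : σ ∈ Ici (τ₀+1)) hσ1
  linarith

set_option maxHeartbeats 1600000 in
private lemma theta_aux_stepB {m a b : ℝ} (hm : 2 < m) (ha : 0 < a) (hb : 0 < b)
    {F : ℝ → ℝ} (hF : ∀ s, F s = a * s ^ (1 + 2 / m) - b * s) {u : ℝ → ℝ}
    (hud : ∀ τ ∈ Set.Ioi (0 : ℝ), DifferentiableAt ℝ u τ)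
    (hud' : ∀ τ ∈ Set.Ioi (0 : ℝ), DifferentiableAt ℝ (deriv u) τ)
    (hode : ∀ τ ∈ Set.Ioi (0 : ℝ),
      deriv (deriv u) τ + (Real.cosh τ / Real.sinh τ) * deriv u τ + F (u τ) = 0)
    (hupos : ∀ τ ∈ Set.Ioi (0 : ℝ), 0 < u τ) (hulim : Tendsto u atTop (nhds 0))
    {T₀ : ℝ} (hT₀1 : 1 ≤ T₀)
    (hsm : ∀ τ ≥ T₀, a * (u τ) ^ (2/m) ≤ b/4)
    (hneg : ∀ τ ≥ T₀, deriv u τ < 0) :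
    ∃ T : ℝ, ∀ τ ≥ T, Real.sqrt (b / 2) < -(deriv u τ) / u τ := by
  have hm0 : (0:ℝ) < m := by linarith
  set l : ℝ := Real.sqrt (b/2) with hl
  have hlpos : 0 < l := Real.sqrt_pos.2 (by linarith)
  have hl2 : l^2 = b/2 := Real.sq_sqrt (by linarith)
  have hsplit : ∀ s : ℝ, 0 ≤ s → s ^ (1+2/m) = s * s ^ (2/m) := fun s hs => by
    rw [Real.rpow_add' hs (by positivity), Real.rpow_one]
  set w : ℝ → ℝ := fun τ => deriv u τ + l * u τ with hw
  have hw' : ∀ τ ∈ Ioi (0:ℝ), HasDerivAt w (deriv (deriv u) τ + l * deriv u τ) τ :=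
    fun τ hτ => ((hud' τ hτ).hasDerivAt).add (((hud τ hτ).hasDerivAt).const_mul l)
  -- key differential inequality when w ≥ 0
  have keyw : ∀ τ ≥ T₀, 0 ≤ w τ → (b/4) * u τ ≤ deriv (deriv u) τ + l * deriv u τ := by
    intro τ hτ hwτ
    have hτ0 : τ ∈ Ioi (0:ℝ) := by simp only [mem_Ioi]; linarith
    have hu : 0 < u τ := hupos τ hτ0
    have hu' : deriv u τ < 0 := hneg τ hτ
    have hsinh : 0 < Real.sinh τ := Real.sinh_pos_iff.2 hτ0
    have hcosh_ge : Real.sinh τ ≤ Real.cosh τ := by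
      nlinarith [Real.cosh_sq_sub_sinh_sq τ, Real.cosh_pos τ]
    set c := Real.cosh τ / Real.sinh τ with hc
    have hc1 : 1 ≤ c := (one_le_div hsinh).2 hcosh_ge
    have h2 := hode τ hτ0
    rw [hF] at h2
    have hdd : deriv (deriv u) τ = -(c * deriv u τ) - (a * u τ ^ (1+2/m) - b * u τ) := by
      rw [hc]; linarith
    have hsm' := hsm τ hτ
    have hsp : u τ ^ (1+2/m) = u τ * u τ ^ (2/m) := hsplit _ (le_of_lt hu)
    have hrp : 0 ≤ u τ ^ (2/m) := Real.rpow_nonneg (le_of_lt hu) _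
    -- a * u^{1+e} ≤ (b/4) u
    have hFb : a * u τ ^ (1+2/m) ≤ (b/4) * u τ := by
      rw [hsp]
      nlinarith
    have hwlow : -(l * u τ) ≤ deriv u τ := by
      simp only [hw] at hwτ; linarith
    rw [hdd]
    rcases le_or_gt l c with hcase | hcase
    · have h5 : 0 ≤ (l - c) * deriv u τ := by
        have := mul_nonneg (neg_nonneg.2 (by linarith : l - c ≤ 0)) (neg_nonneg.2 (le_of_lt hu'))
        nlinarith
      nlinarith
    · have h6 : 0 ≤ l - c := by linarith
      have h7 : (l - c) * (-(l * u τ)) ≤ (l - c) * deriv u τ :=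
        mul_le_mul_of_nonneg_left hwlow h6
      have h8 : l - c ≤ l - 1 := by linarith
      have h9 : (l - c) * (l * u τ) ≤ (l - 1) * (l * u τ) :=
        mul_le_mul_of_nonneg_right h8 (by positivity)
      nlinarith
  -- invariance of w ≥ 0
  have hinv : ∀ τ₀ ≥ T₀, 0 ≤ w τ₀ → ∀ τ₁ ≥ τ₀, 0 ≤ w τ₁ := by
    intro τ₀ hτ₀ hw₀ τ₁ hτ₁
    by_contra hcn
    push_neg at hcn
    have hlt : τ₀ < τ₁ := by
      rcases eq_or_lt_of_le hτ₁ with h | h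
      · exfalso; rw [← h] at hcn; linarith
      · exact h
    have hwc : ContinuousOn w (Icc τ₀ τ₁) := by
      intro x hx
      have hx0 : x ∈ Ioi (0:ℝ) := by simp only [mem_Ioi]; have := hx.1; linarith
      exact ((hw' x hx0).continuousAt).continuousWithinAt
    set S := Icc τ₀ τ₁ ∩ w ⁻¹' (Ici 0) with hS
    have hSne : S.Nonempty := ⟨τ₀, ⟨left_mem_Icc.2 (le_of_lt hlt), by simpa using hw₀⟩⟩
    have hSbdd : BddAbove S := (bddAbove_Icc).mono inter_subset_left
    have hSclosed : IsClosed S := hwc.preimage_isClosed_of_isClosed isClosed_Icc isClosed_Ici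
    set s := sSup S with hs
    have hsS : s ∈ S := hSclosed.csSup_mem hSne hSbdd
    have hsIcc : s ∈ Icc τ₀ τ₁ := hsS.1
    have hws : 0 ≤ w s := hsS.2
    have hsτ₁ : s < τ₁ := by
      rcases eq_or_lt_of_le hsIcc.2 with h | h
      · exfalso; rw [h] at hws; linarith
      · exact h
    have hnegIoc : ∀ τ ∈ Ioc s τ₁, w τ < 0 := by
      intro τ hτ
      by_contra hcn2
      push_neg at hcn2
      have : τ ∈ S := ⟨⟨le_trans hsIcc.1 (le_of_lt hτ.1), hτ.2⟩, by simpa using hcn2⟩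
      have := le_csSup hSbdd this
      linarith [hτ.1]
    have hs0 : s ∈ Ioi (0:ℝ) := by simp only [mem_Ioi]; have := hsIcc.1; linarith
    have hd := hw' s hs0
    have hdpos : 0 < deriv (deriv u) s + l * deriv u s := by
      have := keyw s (le_trans hτ₀ hsIcc.1) hws
      have hu : 0 < u s := hupos s hs0
      nlinarith
    exact theta_cross_up hsτ₁ hd hdpos hws hnegIoc
  -- main argument
  by_contra hcon
  push_neg at hcon
  obtain ⟨τ₀, hτ₀T, hτ₀l⟩ := hcon T₀
  have hτ₀0 : τ₀ ∈ Ioi (0:ℝ) := by simp only [mem_Ioi]; linarith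
  have hu₀ : 0 < u τ₀ := hupos τ₀ hτ₀0
  have hw₀ : 0 ≤ w τ₀ := by
    rw [div_le_iff₀ hu₀] at hτ₀l
    simp only [hw]; linarith
  have hwall : ∀ τ ≥ τ₀, 0 ≤ w τ := hinv τ₀ hτ₀T hw₀
  have hIciIoi : ∀ x ∈ Ici τ₀, x ∈ Ioi (0:ℝ) := fun x hx => by
    simp only [mem_Ioi]; have : τ₀ ≤ x := hx; linarith
  -- exponential helper
  have hexp' : ∀ (r : ℝ) (τ : ℝ), HasDerivAt (fun σ => Real.exp (r * σ)) (r * Real.exp (r * τ)) τ := by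
    intro r τ
    have := (Real.hasDerivAt_exp (r*τ)).comp τ ((hasDerivAt_id τ).const_mul r)
    exact this.congr_deriv (by simp [mul_comm])
  -- g monotone
  have hg' : ∀ τ ∈ Ioi (0:ℝ), HasDerivAt (fun σ => u σ * Real.exp (l * σ))
      (w τ * Real.exp (l * τ)) τ := by
    intro τ hτ
    have := ((hud τ hτ).hasDerivAt).mul (hexp' l τ)
    have heq : deriv u τ * Real.exp (l*τ) + u τ * (l * Real.exp (l*τ)) = w τ * Real.exp (l*τ) := by
      simp only [hw]; ring
    rwa [heq] at this
  have hgmono : MonotoneOn (fun σ => u σ * Real.exp (l * σ)) (Ici τ₀) := by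
    apply monotoneOn_of_deriv_nonneg (convex_Ici τ₀)
    · exact fun x hx => ((hg' x (hIciIoi x hx)).continuousAt).continuousWithinAt
    · intro x hx
      rw [interior_Ici, mem_Ioi] at hx
      exact ((hg' x (hIciIoi x (le_of_lt hx))).differentiableAt).differentiableWithinAt
    · intro x hx
      rw [interior_Ici, mem_Ioi] at hx
      rw [(hg' x (hIciIoi x (le_of_lt hx))).deriv]
      exact mul_nonneg (hwall x (le_of_lt hx)) (le_of_lt (Real.exp_pos _))
  set C₀ : ℝ := u τ₀ * Real.exp (l * τ₀) with hC₀
  have hC₀pos : 0 < C₀ := mul_pos hu₀ (Real.exp_pos _)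
  have hulow : ∀ τ ≥ τ₀, C₀ * Real.exp (-(l*τ)) ≤ u τ := by
    intro τ hτ
    have h1 : C₀ ≤ u τ * Real.exp (l * τ) := hgmono self_mem_Ici hτ hτ
    have h2 := mul_le_mul_of_nonneg_right h1 (le_of_lt (Real.exp_pos (-(l*τ))))
    calc C₀ * Real.exp (-(l*τ)) ≤ u τ * Real.exp (l*τ) * Real.exp (-(l*τ)) := h2
      _ = u τ := by rw [mul_assoc, ← Real.exp_add]; simp
  -- W monotone
  set D : ℝ := b * C₀ / (4 * l) with hD
  have hDpos : 0 < D := by positivity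
  have hW' : ∀ τ ∈ Ioi (0:ℝ), HasDerivAt (fun σ => w σ + D * Real.exp (-(l*σ)))
      ((deriv (deriv u) τ + l * deriv u τ) - D * l * Real.exp (-(l*τ))) τ := by
    intro τ hτ
    have h1 : HasDerivAt (fun σ : ℝ => Real.exp (-(l*σ))) (-l * Real.exp (-l*τ)) τ := by
      have := hexp' (-l) τ
      simpa [neg_mul] using this
    have := (hw' τ hτ).add (h1.const_mul D)
    have heq : deriv (deriv u) τ + l * deriv u τ + D * (-l * Real.exp (-l*τ))
        = (deriv (deriv u) τ + l * deriv u τ) - D * l * Real.exp (-(l*τ)) := by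
      rw [neg_mul]; ring
    rwa [heq] at this
  have hWmono : MonotoneOn (fun σ => w σ + D * Real.exp (-(l*σ))) (Ici τ₀) := by
    apply monotoneOn_of_deriv_nonneg (convex_Ici τ₀)
    · exact fun x hx => ((hW' x (hIciIoi x hx)).continuousAt).continuousWithinAt
    · intro x hx
      rw [interior_Ici, mem_Ioi] at hx
      exact ((hW' x (hIciIoi x (le_of_lt hx))).differentiableAt).differentiableWithinAt
    · intro x hx
      rw [interior_Ici, mem_Ioi] at hx
      rw [(hW' x (hIciIoi x (le_of_lt hx))).deriv]
      have h1 := keyw x (le_trans hτ₀T (le_of_lt hx)) (hwall x (le_of_lt hx))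
      have h2 := hulow x (le_of_lt hx)
      have h3 : D * l = b * C₀ / 4 := by rw [hD]; field_simp
      have h4 : (b/4) * (C₀ * Real.exp (-(l*x))) ≤ (b/4) * u x :=
        mul_le_mul_of_nonneg_left h2 (by linarith)
      rw [h3]
      nlinarith [Real.exp_pos (-(l*x))]
  -- lower bound for w on [τ₀+1, ∞)
  set δ : ℝ := D * (Real.exp (-(l*τ₀)) - Real.exp (-(l*(τ₀+1)))) with hδ
  have hδpos : 0 < δ := by
    apply mul_pos hDpos
    rw [sub_pos]
    apply Real.exp_lt_exp.2
    nlinarith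
  have hwlb : ∀ τ ≥ τ₀+1, δ ≤ w τ := by
    intro τ hτ
    have h1 : w τ₀ + D * Real.exp (-(l*τ₀)) ≤ w τ + D * Real.exp (-(l*τ)) :=
      hWmono self_mem_Ici (by simp only [mem_Ici]; linarith) (by linarith)
    have h2 : Real.exp (-(l*τ)) ≤ Real.exp (-(l*(τ₀+1))) := by
      apply Real.exp_le_exp.2
      nlinarith
    have h3 := mul_le_mul_of_nonneg_left h2 (le_of_lt hDpos)
    simp only [hδ]
    linarith
  -- find a point where u is small, contradiction with hneg
  have hsmall2 : ∀ᶠ τ in atTop, u τ < δ/(2*l) := by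
    have := hulim (Iio_mem_nhds (by positivity : (0:ℝ) < δ/(2*l)))
    filter_upwards [this] with τ hτ using hτ
  obtain ⟨N, hN⟩ := eventually_atTop.mp hsmall2
  set τ₂ := max N (τ₀+1) with hτ₂
  have h1 : u τ₂ < δ/(2*l) := hN τ₂ (le_max_left _ _)
  have h2 : δ ≤ w τ₂ := hwlb τ₂ (le_max_right _ _)
  have h3 : deriv u τ₂ < 0 := hneg τ₂ (by
    have := le_max_right N (τ₀+1); simp only [ge_iff_le]
    calc T₀ ≤ τ₀ := hτ₀T
      _ ≤ τ₀ + 1 := by linarith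
      _ ≤ τ₂ := le_max_right _ _)
  have h4 : l * u τ₂ < δ/2 := by
    have := mul_lt_mul_of_pos_left h1 hlpos
    calc l * u τ₂ < l * (δ/(2*l)) := this
      _ = δ/2 := by field_simp
  simp only [hw] at h2
  linarith

private lemma theta_aux_stepD {b : ℝ} (hb : 0 < b) {u : ℝ → ℝ}
    {T : ℝ} (hT : ∀ τ ≥ T, Real.sqrt (b/2) < -(deriv u τ)/u τ) :
    Tendsto (fun τ => -(Real.sinh τ * deriv u τ) / u τ) atTop atTop := by
  have hlpos : 0 < Real.sqrt (b/2) := Real.sqrt_pos.2 (by linarith)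
  have hsinh : Tendsto Real.sinh atTop atTop := by
    apply tendsto_atTop_mono' atTop ?_ tendsto_id
    filter_upwards [eventually_ge_atTop (1:ℝ)] with x hx
    have h1 : ¬ (Real.sinh x ≤ x) := by rw [Real.sinh_le_self_iff]; linarith
    have := not_le.mp h1
    exact le_of_lt this
  have hmul : Tendsto (fun τ => Real.sinh τ * Real.sqrt (b/2)) atTop atTop :=
    hsinh.atTop_mul_const hlpos
  apply tendsto_atTop_mono' atTop ?_ hmul
  filter_upwards [eventually_ge_atTop (max T 1)] with τ hτ
  have hτT : τ ≥ T := le_trans (le_max_left _ _) hτ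
  have hτ1 : (1:ℝ) ≤ τ := le_trans (le_max_right _ _) hτ
  have hs : 0 < Real.sinh τ := Real.sinh_pos_iff.2 (by linarith)
  have heq : -(Real.sinh τ * deriv u τ)/u τ = Real.sinh τ * (-(deriv u τ)/u τ) := by ring
  rw [heq]
  exact mul_le_mul_of_nonneg_left (le_of_lt (hT τ hτT)) (le_of_lt hs)


/-- Boundary behaviour of the auxiliary function `θ` (Lemma 5.6): for `α ∈ G ∪ N`
with solution `u` and `θ(τ) = −sinh(τ)·u'(τ)/u(τ)`, one has `θ(τ) → 0` as `τ → 0⁺`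
and `θ(τ) → +∞` as `τ → b(α)` (for `α ∈ G` this means `θ(τ) → +∞` as `τ → ∞`;
in particular, for `α ∈ G` one eventually has `−u'(τ)/u(τ) > √(b̃/2)`).
The two conjuncts treat the cases `α ∈ N` and `α ∈ G`. -/
theorem theta_boundary_behaviour
    (m a b : ℝ) (hm : 2 < m) (ha : 0 < a) (hb : 0 < b)
    (F : ℝ → ℝ) (hF : ∀ s, F s = a * s ^ (1 + 2 / m) - b * s)
    (α : ℝ) (hα : 0 < α)
    (u : ℝ → ℝ)
    (huc : ContinuousOn u (Ici 0))
    (hud : ∀ τ ∈ Ioi (0 : ℝ), DifferentiableAt ℝ u τ)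
    (hud' : ∀ τ ∈ Ioi (0 : ℝ), DifferentiableAt ℝ (deriv u) τ)
    (hode : ∀ τ ∈ Ioi (0 : ℝ),
      deriv (deriv u) τ + (Real.cosh τ / Real.sinh τ) * deriv u τ + F (u τ) = 0)
    (hu0 : u 0 = α)
    (hu'0 : Tendsto (deriv u) (nhdsWithin 0 (Ioi 0)) (nhds 0)) :
    (∀ bα : ℝ, 0 < bα → u bα = 0 → (∀ τ ∈ Ico 0 bα, 0 < u τ) →
        Tendsto (fun τ => -(Real.sinh τ * deriv u τ) / u τ)
            (nhdsWithin 0 (Ioi 0)) (nhds 0) ∧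
        Tendsto (fun τ => -(Real.sinh τ * deriv u τ) / u τ)
            (nhdsWithin bα (Iio bα)) atTop) ∧
    ((∀ τ ∈ Ioi (0 : ℝ), 0 < u τ) → Tendsto u atTop (nhds 0) →
        Tendsto (fun τ => -(Real.sinh τ * deriv u τ) / u τ)
            (nhdsWithin 0 (Ioi 0)) (nhds 0) ∧
        Tendsto (fun τ => -(Real.sinh τ * deriv u τ) / u τ) atTop atTop ∧
        ∃ T : ℝ, ∀ τ ≥ T, Real.sqrt (b / 2) < -(deriv u τ) / u τ) := by
  have hzero_lim := theta_aux_zero hα huc hu0 hu'0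
  constructor
  · intro bα hbα hubα hpos
    refine ⟨hzero_lim, ?_⟩
    have hne : deriv u bα ≠ 0 := fun hz =>
      theta_aux_gronwall hm ha hb hF hud hud' hode hbα hubα hpos hz
    exact theta_aux_part1 hud hud' hbα hubα hpos hne
  · intro hupos hulim
    obtain ⟨T₀, hT₀1, hsm⟩ := theta_aux_small hm ha hb hupos hulim
    have hneg := theta_aux_stepA hm ha hb hF hud hud' hode hupos hulim hT₀1 hsm
    obtain ⟨T, hT⟩ := theta_aux_stepB hm ha hb hF hud hud' hode hupos hulim hT₀1 hsm hneg
    exact ⟨hzero_lim, theta_aux_stepD hb hT, ⟨T, hT⟩⟩
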